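/- Let A₀ be the identity, and let A₁, A₂ ∈ ℝ^{V×V} with V the set of 2-subsets of [n] (n ≥ 4), where A_k(x,y) = 1 if |x ∩ y| = 2 − k and 0 otherwise. Then the matrix A = A₀ + (1/2)A₁ + ((n−2)/(2(n−3)))A₂ is positive semidefinite, and ⟨J, A⟩/|V| = n²/4, where J is the all-ones matrix. -/

import Mathlib

open Matrix Finset

namespace JohnsonAux12

variable {n : ℕ}

/-- Incidence matrix of 2-subsets vs points. -/
noncomputable def Nm (n : ℕ) : Matrix {x : Finset (Fin n) // x.card = 2} (Fin n) ℝ :=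
  Matrix.of fun x i => if i ∈ x.1 then 1 else 0

/-- All-ones matrix on 2-subsets. -/
noncomputable def Jv (n : ℕ) :
    Matrix {x : Finset (Fin n) // x.card = 2} {x : Finset (Fin n) // x.card = 2} ℝ :=
  Matrix.of fun _ _ => 1

/-- All-ones matrix on points. -/
noncomputable def Jn (n : ℕ) : Matrix (Fin n) (Fin n) ℝ := Matrix.of fun _ _ => 1

/-- Intersection-cardinality matrix. -/
noncomputable def Mm (n : ℕ) :
    Matrix {x : Finset (Fin n) // x.card = 2} {x : Finset (Fin n) // x.card = 2} ℝ :=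
  Nm n * (Nm n)ᵀ

lemma card_filter_mem (i : Fin n) :
    (univ.filter fun x : {x : Finset (Fin n) // x.card = 2} => i ∈ x.1).card = n - 1 := by
  have h : (univ.erase i).card
      = (univ.filter fun x : {x : Finset (Fin n) // x.card = 2} => i ∈ x.1).card := by
    refine Finset.card_bij
      (fun (j : Fin n) (hj : j ∈ univ.erase i) =>
        (⟨{i, j}, Finset.card_pair (Finset.ne_of_mem_erase hj).symm⟩ :
          {x : Finset (Fin n) // x.card = 2})) ?_ ?_ ?_
    · intro j hj
      simp
    · intro a ha b hb hab
      simp only [Subtype.mk.injEq] at hab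
      have ha' : a ∈ ({i, b} : Finset (Fin n)) := by rw [← hab]; simp
      rcases Finset.mem_insert.1 ha' with h | h
      · exact absurd h (Finset.ne_of_mem_erase ha)
      · simpa using h
    · intro x hx
      simp only [Finset.mem_filter] at hx
      obtain ⟨a, b, hab, hx2⟩ := Finset.card_eq_two.1 x.2
      have hi : i ∈ x.1 := hx.2
      rw [hx2] at hi
      rcases Finset.mem_insert.1 hi with rfl | h
      · refine ⟨b, Finset.mem_erase.2 ⟨hab.symm, Finset.mem_univ _⟩, ?_⟩
        apply Subtype.ext; rw [hx2]
      · simp only [Finset.mem_singleton] at h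
        subst h
        refine ⟨a, Finset.mem_erase.2 ⟨hab, Finset.mem_univ _⟩, ?_⟩
        apply Subtype.ext; rw [hx2]; exact Finset.pair_comm i a
  rw [← h, Finset.card_erase_of_mem (Finset.mem_univ _), Finset.card_univ, Fintype.card_fin]

lemma filter_pair_eq {i j : Fin n} (hij : i ≠ j) :
    (univ.filter fun x : {x : Finset (Fin n) // x.card = 2} => i ∈ x.1 ∧ j ∈ x.1)
      = {⟨{i, j}, Finset.card_pair hij⟩} := by
  apply Finset.eq_singleton_iff_unique_mem.2
  constructor
  · simp
  · intro x hx
    simp only [Finset.mem_filter] at hx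
    apply Subtype.ext
    symm
    apply Finset.eq_of_subset_of_card_le
    · exact Finset.insert_subset hx.2.1 (Finset.singleton_subset_iff.2 hx.2.2)
    · rw [x.2, Finset.card_pair hij]

lemma colsum (hn : 1 ≤ n) (i : Fin n) :
    (∑ x : {x : Finset (Fin n) // x.card = 2}, if i ∈ x.1 then (1 : ℝ) else 0)
      = (n : ℝ) - 1 := by
  rw [Finset.sum_boole, card_filter_mem]
  have : ((n : ℝ) - 1) = ((n - 1 : ℕ) : ℝ) := by
    rw [Nat.cast_sub hn]; norm_num
  rw [this]

lemma rowsum (x : {x : Finset (Fin n) // x.card = 2}) :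
    (∑ i : Fin n, if i ∈ x.1 then (1 : ℝ) else 0) = 2 := by
  rw [Finset.sum_boole]
  have : univ.filter (fun i : Fin n => i ∈ x.1) = x.1 := by
    ext i; simp
  rw [this, x.2]; norm_num

lemma hNtN (hn : 4 ≤ n) : (Nm n)ᵀ * Nm n = ((n : ℝ) - 2) • 1 + Jn n := by
  ext i j
  simp only [Matrix.mul_apply, transpose_apply, Nm, Jn, Matrix.of_apply,
    Matrix.add_apply, Matrix.smul_apply, Matrix.one_apply, smul_eq_mul]
  rcases eq_or_ne i j with rfl | hij
  · have : ∀ x : {x : Finset (Fin n) // x.card = 2},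
        (if i ∈ x.1 then (1:ℝ) else 0) * (if i ∈ x.1 then (1:ℝ) else 0)
          = if i ∈ x.1 then (1:ℝ) else 0 := by
      intro x; split_ifs <;> ring
    rw [Finset.sum_congr rfl fun x _ => this x, colsum (by omega) i]
    simp; ring
  · have : ∀ x : {x : Finset (Fin n) // x.card = 2},
        (if i ∈ x.1 then (1:ℝ) else 0) * (if j ∈ x.1 then (1:ℝ) else 0)
          = if i ∈ x.1 ∧ j ∈ x.1 then (1:ℝ) else 0 := by
      intro x; split_ifs with h1 h2 h3 <;> simp_all
    rw [Finset.sum_congr rfl fun x _ => this x, Finset.sum_boole, filter_pair_eq hij]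
    simp [hij]

lemma Mm_apply (x y : {x : Finset (Fin n) // x.card = 2}) :
    Mm n x y = ((x.1 ∩ y.1).card : ℝ) := by
  simp only [Mm, Matrix.mul_apply, transpose_apply, Nm, Matrix.of_apply]
  have : ∀ i : Fin n,
      (if i ∈ x.1 then (1:ℝ) else 0) * (if i ∈ y.1 then (1:ℝ) else 0)
        = if i ∈ x.1 ∩ y.1 then (1:ℝ) else 0 := by
    intro i; by_cases h1 : i ∈ x.1 <;> by_cases h2 : i ∈ y.1 <;>
      simp [h1, h2, Finset.mem_inter]
  rw [Finset.sum_congr rfl fun i _ => this i, Finset.sum_boole]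
  congr 1
  apply Finset.card_nbij id (by intro a ha; simpa using ha)
  · intro a ha b hb hab; exact hab
  · intro a ha; exact ⟨a, by simpa using ha, rfl⟩

lemma cardV (hn : 4 ≤ n) :
    (Fintype.card {x : Finset (Fin n) // x.card = 2} : ℝ) = (n : ℝ) * ((n : ℝ) - 1) / 2 := by
  rw [Fintype.card_finset_len, Fintype.card_fin]
  have h2 : (n.choose 2) * 2 = n * (n - 1) := by
    rw [Nat.choose_two_right]
    exact Nat.div_mul_cancel (by
      rcases Nat.even_or_odd n with h | h
      · exact Dvd.dvd.mul_right h.two_dvd _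
      · exact Dvd.dvd.mul_left (Nat.Odd.sub_odd h odd_one).two_dvd _)
  have := congrArg (fun k : ℕ => (k : ℝ)) h2
  push_cast [Nat.cast_sub (by omega : 1 ≤ n)] at this
  linarith

lemma Mrow (hn : 4 ≤ n) (x : {x : Finset (Fin n) // x.card = 2}) :
    (∑ y, Mm n x y) = 2 * ((n : ℝ) - 1) := by
  simp only [Mm, Matrix.mul_apply, transpose_apply, Nm, Matrix.of_apply]
  rw [Finset.sum_comm]
  have : ∀ i : Fin n, (∑ y : {x : Finset (Fin n) // x.card = 2},
      (if i ∈ x.1 then (1:ℝ) else 0) * (if i ∈ y.1 then (1:ℝ) else 0))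
      = (if i ∈ x.1 then (1:ℝ) else 0) * ((n:ℝ) - 1) := by
    intro i
    rw [← Finset.mul_sum, colsum (by omega) i]
  rw [Finset.sum_congr rfl fun i _ => this i, ← Finset.sum_mul, rowsum x]

lemma hMsym : (Mm n)ᵀ = Mm n := by
  simp [Mm, Matrix.transpose_mul]

lemma hJJ (hn : 4 ≤ n) : Jv n * Jv n = ((n : ℝ) * ((n : ℝ) - 1) / 2) • Jv n := by
  ext x y
  simp only [Jv, Matrix.mul_apply, Matrix.of_apply, Matrix.smul_apply, smul_eq_mul,
    mul_one, Finset.sum_const, Finset.card_univ, nsmul_eq_mul]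
  rw [cardV hn]

lemma hMJ (hn : 4 ≤ n) : Mm n * Jv n = (2 * ((n : ℝ) - 1)) • Jv n := by
  ext x y
  simp only [Jv, Matrix.mul_apply, Matrix.of_apply, Matrix.smul_apply, smul_eq_mul, mul_one]
  rw [Mrow hn x]

lemma hJM (hn : 4 ≤ n) : Jv n * Mm n = (2 * ((n : ℝ) - 1)) • Jv n := by
  have := congrArg Matrix.transpose (hMJ hn)
  rwa [Matrix.transpose_mul, hMsym, Matrix.transpose_smul,
    show (Jv n)ᵀ = Jv n from rfl] at this

lemma hNJN (hn : 4 ≤ n) : Nm n * Jn n * (Nm n)ᵀ = (4 : ℝ) • Jv n := by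
  ext x y
  simp only [Matrix.mul_apply, Jn, Jv, Nm, Matrix.of_apply, transpose_apply,
    Matrix.smul_apply, smul_eq_mul]
  have : ∀ j : Fin n, (∑ i : Fin n, (if i ∈ x.1 then (1:ℝ) else 0) * 1)
      * (if j ∈ y.1 then (1:ℝ) else 0)
      = 2 * (if j ∈ y.1 then (1:ℝ) else 0) := by
    intro j
    simp only [mul_one]
    rw [rowsum x]
  calc (∑ j, (∑ i, (if i ∈ x.1 then (1:ℝ) else 0) * 1) * (if j ∈ y.1 then (1:ℝ) else 0))
      = ∑ j, 2 * (if j ∈ y.1 then (1:ℝ) else 0) := Finset.sum_congr rfl fun j _ => this j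
    _ = 2 * 2 := by rw [← Finset.mul_sum, rowsum y]
    _ = 4 * 1 := by ring

lemma hMM (hn : 4 ≤ n) :
    Mm n * Mm n = ((n : ℝ) - 2) • Mm n + (4 : ℝ) • Jv n := by
  have : Mm n * Mm n = Nm n * ((Nm n)ᵀ * Nm n) * (Nm n)ᵀ := by
    simp only [Mm, Matrix.mul_assoc]
  rw [this, hNtN hn]
  rw [Matrix.mul_add, Matrix.add_mul, Matrix.mul_smul, Matrix.mul_one, Matrix.smul_mul]
  rw [hNJN hn]
  rfl

/-- The idempotent (up to scale) combination. -/
noncomputable def Qp (n : ℕ) :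
    Matrix {x : Finset (Fin n) // x.card = 2} {x : Finset (Fin n) // x.card = 2} ℝ :=
  (((n : ℝ) - 2) * ((n : ℝ) - 1)) • 1 - ((n : ℝ) - 1) • Mm n + (2 : ℝ) • Jv n

lemma hQpQp (hn : 4 ≤ n) :
    Qp n * Qp n = (((n : ℝ) - 2) * ((n : ℝ) - 1)) • Qp n := by
  simp only [Qp, sub_mul, mul_sub, add_mul, mul_add, Matrix.smul_mul, Matrix.mul_smul,
    Matrix.one_mul, Matrix.mul_one, smul_smul, smul_sub, smul_add]
  rw [hMM hn, hMJ hn, hJM hn, hJJ hn]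
  simp only [smul_add, smul_smul]
  module

lemma hQpsym : (Qp n)ᵀ = Qp n := by
  simp only [Qp, Matrix.transpose_add, Matrix.transpose_sub, Matrix.transpose_smul,
    Matrix.transpose_one, hMsym]
  rfl

lemma hJvPSD : (Jv n).PosSemidef := by
  have h : Jv n = (Matrix.of fun (_ : Fin 1) (_ : {x : Finset (Fin n) // x.card = 2}) =>
      (1:ℝ))ᴴ * (Matrix.of fun (_ : Fin 1) (_ : {x : Finset (Fin n) // x.card = 2}) =>
      (1:ℝ)) := by
    ext x y
    simp [Matrix.mul_apply, Jv]
  rw [h]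
  exact Matrix.posSemidef_conjTranspose_mul_self _

lemma psd_smul {m : Type*} [Fintype m] {Q : Matrix m m ℝ} (h : Q.PosSemidef) {c : ℝ}
    (hc : 0 ≤ c) : (c • Q).PosSemidef := by
  refine ⟨?_, fun v => ?_⟩
  · have := h.1
    simp only [Matrix.IsHermitian] at this ⊢
    rw [Matrix.conjTranspose_smul, this]
    congr 1
  · convert mul_nonneg hc (h.2 v) using 1
    rw [Finsupp.mul_sum]
    refine Finsupp.sum_congr fun i _ => ?_
    rw [Finsupp.mul_sum]
    refine Finsupp.sum_congr fun j _ => ?_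
    simp only [Matrix.smul_apply, smul_eq_mul]
    ring

lemma hQPSD (hn : 4 ≤ n) :
    ((((n : ℝ) - 2) * ((n : ℝ) - 1))⁻¹ • Qp n).PosSemidef := by
  have hreal : (4:ℝ) ≤ (n:ℝ) := by exact_mod_cast hn
  have hs : ((n : ℝ) - 2) * ((n : ℝ) - 1) ≠ 0 := by nlinarith
  set s := ((n : ℝ) - 2) * ((n : ℝ) - 1) with hsdef
  set Q := s⁻¹ • Qp n with hQdef
  have hQsym : Qᴴ = Q := by
    rw [hQdef, Matrix.conjTranspose_smul]
    have : (Qp n)ᴴ = Qp n := by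
      rw [Matrix.conjTranspose, show (Qp n)ᵀ = Qp n from hQpsym]
      ext x y; simp
    rw [this]
    congr 1
  have hQQ : Q * Q = Q := by
    rw [hQdef, Matrix.smul_mul, Matrix.mul_smul, smul_smul, hQpQp hn, ← hsdef, smul_smul]
    rw [mul_assoc, inv_mul_cancel₀ hs, mul_one]
  have : Q = Qᴴ * Q := by rw [hQsym, hQQ]
  rw [this]
  exact Matrix.posSemidef_conjTranspose_mul_self _

end JohnsonAux12

open JohnsonAux12 in
/-- For `n ≥ 4`, with `V` the set of 2-subsets of `[n]`, the
matrix `A = A₀ + (1/2)A₁ + ((n-2)/(2(n-3)))A₂` of the Johnson scheme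
`J(n,2)` (where `A_k(x,y) = 1` iff `|x ∩ y| = 2 - k`) is positive
semidefinite, and `⟨J, A⟩/|V| = n²/4`. -/
theorem johnson_scheme_matrix_posSemidef (n : ℕ) (hn : 4 ≤ n)
    (A : Matrix {x : Finset (Fin n) // x.card = 2}
        {x : Finset (Fin n) // x.card = 2} ℝ)
    (hA : ∀ x y, A x y =
      if (x.1 ∩ y.1).card = 2 then 1
      else if (x.1 ∩ y.1).card = 1 then 1 / 2
      else ((n : ℝ) - 2) / (2 * ((n : ℝ) - 3))) :
    A.PosSemidef ∧
      (∑ x, ∑ y, A x y) /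
          (Fintype.card {x : Finset (Fin n) // x.card = 2} : ℝ) =
        (n : ℝ) ^ 2 / 4 := by
  have hreal : (4:ℝ) ≤ (n:ℝ) := by exact_mod_cast hn
  have h1 : (n:ℝ) - 1 ≠ 0 := by nlinarith
  have h2 : (n:ℝ) - 2 ≠ 0 := by nlinarith
  have h3 : (n:ℝ) - 3 ≠ 0 := by nlinarith
  set a : ℝ := (n:ℝ) / (2 * ((n:ℝ) - 1)) with hadef
  set b : ℝ := ((n:ℝ) - 2) / (2 * ((n:ℝ) - 3)) with hbdef
  set s : ℝ := ((n : ℝ) - 2) * ((n : ℝ) - 1) with hsdef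
  have hs : s ≠ 0 := mul_ne_zero h2 h1
  set Q := s⁻¹ • Qp n with hQdef
  have hQapp : ∀ x y : {x : Finset (Fin n) // x.card = 2},
      Q x y = s⁻¹ * (s * (if x = y then (1:ℝ) else 0)
      - ((n:ℝ) - 1) * ((x.1 ∩ y.1).card : ℝ) + 2) := by
    intro x y
    simp only [hQdef, Qp, Matrix.smul_apply, Matrix.add_apply, Matrix.sub_apply,
      Matrix.one_apply, Jv, Matrix.of_apply, smul_eq_mul, Mm_apply]
    simp only [← hsdef]
    ring
  have e2 : (1:ℝ) = a * 1 + b * (s⁻¹ * (s * 1 - ((n:ℝ) - 1) * 2 + 2)) := by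
    rw [hadef, hbdef, hsdef]
    field_simp
    ring
  have e1 : (1:ℝ)/2 = a * 1 + b * (s⁻¹ * (s * 0 - ((n:ℝ) - 1) * 1 + 2)) := by
    rw [hadef, hbdef, hsdef]
    field_simp
    ring
  have e0 : b = a * 1 + b * (s⁻¹ * (s * 0 - ((n:ℝ) - 1) * 0 + 2)) := by
    rw [hadef, hbdef, hsdef]
    field_simp
    ring
  -- the decomposition
  have hAdec : A = a • Jv n + b • Q := by
    ext x y
    rw [hA]
    simp only [Matrix.add_apply, Matrix.smul_apply, Jv, Matrix.of_apply, smul_eq_mul,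
      hQapp x y]
    have hcard_le : (x.1 ∩ y.1).card ≤ 2 := by
      calc (x.1 ∩ y.1).card ≤ x.1.card := Finset.card_le_card Finset.inter_subset_left
        _ = 2 := x.2
    by_cases hc2 : (x.1 ∩ y.1).card = 2
    · have hxy : x = y := by
        apply Subtype.ext
        have ha1 : x.1 ∩ y.1 = x.1 :=
          Finset.eq_of_subset_of_card_le Finset.inter_subset_left (by rw [x.2, hc2])
        have ha2 : x.1 ∩ y.1 = y.1 :=
          Finset.eq_of_subset_of_card_le Finset.inter_subset_right (by rw [y.2, hc2])
        rw [← ha1, ha2]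
      rw [if_pos hc2, if_pos hxy, hc2]
      exact_mod_cast e2
    · have hxy : x ≠ y := by
        intro h; subst h; rw [Finset.inter_self, x.2] at hc2; exact hc2 rfl
      rw [if_neg hc2, if_neg hxy]
      by_cases hc1 : (x.1 ∩ y.1).card = 1
      · rw [if_pos hc1, hc1]
        exact_mod_cast e1
      · have hc0 : (x.1 ∩ y.1).card = 0 := by omega
        rw [if_neg hc1, hc0]
        exact_mod_cast e0
  have hcardV := cardV (n := n) hn
  constructor
  · rw [hAdec]
    have hb : 0 ≤ b := by
      rw [hbdef]; apply div_nonneg <;> nlinarith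
    have ha : 0 ≤ a := by
      rw [hadef]; apply div_nonneg <;> nlinarith
    exact (psd_smul hJvPSD ha).add (psd_smul (hQPSD hn) hb)
  · have hQrow : ∀ x, (∑ y, Q x y) = 0 := by
      intro x
      rw [Finset.sum_congr rfl fun y _ => hQapp x y]
      rw [← Finset.mul_sum]
      rw [Finset.sum_add_distrib, Finset.sum_sub_distrib, ← Finset.mul_sum, ← Finset.mul_sum]
      rw [Finset.sum_ite_eq univ x (fun _ => (1:ℝ))]
      simp only [Finset.mem_univ, if_pos, Finset.sum_const, Finset.card_univ, nsmul_eq_mul,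
        mul_one]
      have hMr : (∑ y : {x : Finset (Fin n) // x.card = 2}, ((x.1 ∩ y.1).card : ℝ))
          = 2 * ((n:ℝ) - 1) := by
        rw [← Finset.sum_congr rfl fun y _ => Mm_apply x y]
        exact Mrow hn x
      rw [hMr, hcardV]
      have hz : s * 1 - ((n:ℝ) - 1) * (2 * ((n:ℝ) - 1))
          + (n:ℝ) * ((n:ℝ) - 1) / 2 * 2 = 0 := by
        rw [hsdef]; ring
      linear_combination s⁻¹ * hz
    have hArow : ∀ x, (∑ y, A x y) = a * ((n : ℝ) * ((n : ℝ) - 1) / 2) := by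
      intro x
      rw [hAdec]
      simp only [Matrix.add_apply, Matrix.smul_apply, Jv, Matrix.of_apply, smul_eq_mul]
      rw [Finset.sum_add_distrib, ← Finset.mul_sum, ← Finset.mul_sum, hQrow x, mul_zero,
        add_zero]
      simp only [mul_one, Finset.sum_const, Finset.card_univ, nsmul_eq_mul]
      rw [hcardV]
    rw [Finset.sum_congr rfl fun x _ => hArow x]
    simp only [Finset.sum_const, Finset.card_univ, nsmul_eq_mul]
    rw [hcardV, hadef]
    field_simp
    try ring
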